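/- For every ρ ∈ (0,1), the point a(ρ) = 2 e^{2πiρ} + 2 e^{πiρ} √(e^{2πiρ} − 1) satisfies the limaçon equation 4|a(ρ) − 1| = |a(ρ)|². -/

import Mathlib

open Real

lemma limacon_key (w s : ℂ) (hw : ‖w‖ = 1) (hs : s * s = w ^ 2 - 1) :
    4 * ‖2 * w ^ 2 + 2 * w * s - 1‖ =
      (‖2 * w ^ 2 + 2 * w * s‖) ^ 2 := by
  have h1 : 2 * w ^ 2 + 2 * w * s - 1 = (w + s) ^ 2 := by linear_combination -hs
  have h2 : 2 * w ^ 2 + 2 * w * s = 2 * w * (w + s) := by ring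
  rw [h1, h2, norm_pow, norm_mul, norm_mul, hw, Complex.norm_two]
  ring

theorem limacon_alt_parametrization (ρ : ℝ) (hρ : ρ ∈ Set.Ioo (0 : ℝ) 1) :
    let a : ℂ := 2 * Complex.exp (2 * π * Complex.I * ρ) +
      2 * Complex.exp (π * Complex.I * ρ) *
        (Complex.exp (2 * π * Complex.I * ρ) - 1) ^ ((1 : ℂ) / 2)
    4 * ‖a - 1‖ = ‖a‖ ^ 2 := by
  intro a
  obtain ⟨h0, h1⟩ := hρ
  set w : ℂ := Complex.exp (π * Complex.I * ρ) with hwdef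
  have hw2 : Complex.exp (2 * π * Complex.I * ρ) = w ^ 2 := by
    rw [hwdef, ← Complex.exp_nat_mul]
    ring_nf
  have hne : Complex.exp (2 * π * Complex.I * ρ) - 1 ≠ 0 := by
    intro h
    have he : Complex.exp (2 * π * Complex.I * ρ) = 1 := sub_eq_zero.mp h
    rw [Complex.exp_eq_one_iff] at he
    obtain ⟨n, hn⟩ := he
    have hI : (2 : ℂ) * π * Complex.I ≠ 0 := by
      simp [Complex.I_ne_zero, Real.pi_ne_zero, Complex.ofReal_ne_zero]
    have hρn : (ρ : ℂ) = n := by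
      apply mul_left_cancel₀ hI
      rw [mul_comm ((n : ℂ)) (2 * ↑π * Complex.I)] at hn
      linear_combination hn
    have : ρ = (n : ℝ) := by exact_mod_cast hρn
    rw [this] at h0 h1
    have : (0 : ℤ) < n := by exact_mod_cast h0
    have : (n : ℤ) < 1 := by exact_mod_cast h1
    omega
  set s : ℂ := (Complex.exp (2 * π * Complex.I * ρ) - 1) ^ ((1 : ℂ) / 2) with hsdef
  have hs : s * s = w ^ 2 - 1 := by
    rw [hsdef, ← Complex.cpow_add _ _ hne]
    norm_num [Complex.cpow_one, hw2]
  have hwabs : ‖w‖ = 1 := by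
    rw [hwdef, Complex.norm_exp]
    norm_num [Complex.mul_re, Complex.I_re, Complex.I_im]
  have ha : a = 2 * w ^ 2 + 2 * w * s := by
    show 2 * Complex.exp (2 * π * Complex.I * ρ) + 2 * w * s = _
    rw [hw2]
  rw [ha]
  exact limacon_key w s hwabs hs
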